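/- Suppose there exist ε > 0 and C > 0 such that for all sufficiently large n, ∏_{j=1}^{n−1} (1 + q_j^(M_j − φ(q_j))) ≤ C·(φ(q_n)·log q_n)^(1−ε). Then for every s > 1 − ε, the generalized Hausdorff measure H^{h_s} of E is zero, where h_s is the gauge h_s(r) = (log(1/r))^(−s) for small r > 0. In particular the logarithmic Hausdorff dimension of E is at most 1 − ε. -/

import Mathlib

open Filter Set Metric Pointwise

/-- The gauge `h_s(r) = (log(1/r))^(-s)` as a function `ℝ≥0∞ → ℝ≥0∞`, used to build
the generalized (logarithmic) Hausdorff measure via Carathéodory's metric construction. -/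
noncomputable def hGauge (s : ℝ) : ENNReal → ENNReal :=
  fun r => ENNReal.ofReal ((Real.log (1 / r.toReal)) ^ (-s))

set_option maxHeartbeats 2000000

/-- Small logarithmic Hausdorff dimension. If
`∏_{j=1}^{n-1} (1 + q_j^{M_j - φ(q_j)}) ≤ C (φ(q_n) log q_n)^{1-ε}` for all sufficiently
large `n` (restated with 0-based indices), then `H^{h_s}(E) = 0` for every `s > 1 - ε`;
in particular the logarithmic Hausdorff dimension of `E` is at most `1 - ε`. -/
theorem falconer_log_hausdorff_dim_le
    (M : ℕ → ℕ) (hMpos : ∀ i, 0 < M i) (hMmono : Monotone M)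
    (hMtop : Tendsto M atTop atTop)
    (q : ℕ → ℕ) (hq0 : q 0 = 2) (hqrec : ∀ i, q (i + 1) = q i ^ M i)
    (φ : ℝ → ℝ) (hφpos : ∀ t : ℝ, 2 ≤ t → 0 < φ t)
    (hφmono : MonotoneOn φ (Set.Ici (2 : ℝ)))
    (hφtop : Tendsto φ atTop atTop)
    (G : ℕ → Set ℝ)
    (hG : ∀ i, G i = {x : ℝ | ∃ k : ℤ, 0 ≤ k ∧ k ≤ (q i : ℤ) ∧ x = (k : ℝ) / (q i : ℝ)})
    (r : ℕ → ℝ) (hr : ∀ i, r i = (q i : ℝ) ^ (-φ ((q i : ℕ) : ℝ)))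
    (Ei : ℕ → Set ℝ)
    (hEi : ∀ i, Ei i = {x ∈ Set.Icc (0 : ℝ) 1 | Metric.infDist x (G i) ≤ r i})
    (E : Set ℝ) (hE : E = ⋂ i, Ei i)
    (ε C : ℝ) (hε : 0 < ε) (hC : 0 < C)
    (hbound : ∀ᶠ k in atTop,
      ∏ j ∈ Finset.range k, (1 + (q j : ℝ) ^ ((M j : ℝ) - φ ((q j : ℕ) : ℝ))) ≤
        C * (φ ((q k : ℕ) : ℝ) * Real.log (q k : ℝ)) ^ ((1 : ℝ) - ε)) :
    (∀ s : ℝ, 1 - ε < s → MeasureTheory.Measure.mkMetric (hGauge s) E = 0) ∧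
      sInf {s : ℝ | 0 < s ∧ MeasureTheory.Measure.mkMetric (hGauge s) E = 0} ≤ 1 - ε := by
  classical
  -- basic positivity facts
  have hq2 : ∀ n, 2 ≤ q n := by
    intro n
    induction n with
    | zero => omega
    | succ n ih =>
      rw [hqrec]
      exact le_trans ih (Nat.le_self_pow (hMpos n).ne' _)
  have hqR : ∀ n, (2 : ℝ) ≤ (q n : ℝ) := fun n => by exact_mod_cast hq2 n
  have hqpos : ∀ n, (0 : ℝ) < (q n : ℝ) := fun n => lt_of_lt_of_le two_pos (hqR n)
  have hφq : ∀ n, 0 < φ (q n) := fun n => hφpos _ (hqR n)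
  have hlogq : ∀ n, 0 < Real.log (q n) := fun n =>
    Real.log_pos (lt_of_lt_of_le one_lt_two (hqR n))
  set Y : ℕ → ℝ := fun n => φ (q n) * Real.log (q n) with hYdef
  have hYpos : ∀ n, 0 < Y n := fun n => mul_pos (hφq n) (hlogq n)
  have hrexp : ∀ n, r n = Real.exp (-(Y n)) := by
    intro n
    rw [hr, Real.rpow_def_of_pos (hqpos n), hYdef]
    ring_nf
  have hrpos : ∀ n, 0 < r n := fun n => (hrexp n) ▸ Real.exp_pos _
  have hqmono : ∀ n, q n ≤ q (n + 1) := by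
    intro n
    rw [hqrec]
    exact Nat.le_self_pow (hMpos n).ne' _
  have hYmono : ∀ n, Y n ≤ Y (n + 1) := by
    intro n
    have h1 : (q n : ℝ) ≤ (q (n + 1) : ℝ) := by exact_mod_cast hqmono n
    have h2 : φ (q n) ≤ φ (q (n + 1)) := hφmono (hqR n) (le_trans (hqR n) h1) h1
    have h3 : Real.log (q n) ≤ Real.log (q (n + 1)) := Real.log_le_log (hqpos n) h1
    exact mul_le_mul h2 h3 (hlogq n).le (le_trans (hφq n).le h2)
  have hranti : ∀ n, r (n + 1) ≤ r n := by
    intro n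
    rw [hrexp, hrexp]
    exact Real.exp_le_exp.2 (by linarith [hYmono n])
  -- the product of the M's and the logarithm of q
  set P : ℕ → ℕ := fun n => ∏ j ∈ Finset.range n, M j with hPdef
  have hP1 : ∀ n, 1 ≤ P n := fun n => Finset.one_le_prod' fun j _ => hMpos j
  have hlogq_eq : ∀ n, Real.log (q n) = (P n : ℝ) * Real.log 2 := by
    intro n
    induction n with
    | zero => simp [hPdef, hq0]
    | succ n ih =>
      rw [hqrec, Nat.cast_pow, Real.log_pow, ih]
      show _ = ((∏ j ∈ Finset.range (n+1), M j : ℕ) : ℝ) * Real.log 2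
      rw [Finset.prod_range_succ]
      push_cast [hPdef]
      ring
  have hPgeo : ∀ (c n1 : ℕ), (∀ j, n1 ≤ j → c ≤ M j) → ∀ n, c ^ (n - n1) ≤ P n := by
    intro c n1 hc n
    rcases le_or_gt n n1 with h | h
    · rw [Nat.sub_eq_zero_of_le h]
      simpa using hP1 n
    · calc c ^ (n - n1) = ∏ _j ∈ Finset.Ico n1 n, c := by
            rw [Finset.prod_const, Nat.card_Ico]
        _ ≤ ∏ j ∈ Finset.Ico n1 n, M j :=
            Finset.prod_le_prod' fun j hj => hc j (Finset.mem_Ico.1 hj).1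
        _ ≤ P n := by
            refine Finset.prod_le_prod_of_subset_of_one_le' ?_ ?_
            · intro j hj
              exact Finset.mem_range.2 (Finset.mem_Ico.1 hj).2
            · intro j _ _
              exact hMpos j
  have hPtop : Tendsto (fun n => (P n : ℝ)) atTop atTop := by
    obtain ⟨n2, hn2⟩ := (hMtop.eventually_ge_atTop 2).exists_forall_of_atTop
    have h2 : Tendsto (fun n : ℕ => ((2 : ℕ) ^ (n - n2) : ℕ)) atTop atTop :=
      (tendsto_pow_atTop_atTop_of_one_lt one_lt_two).comp (tendsto_sub_atTop_nat n2)
    have h3 : Tendsto (fun n => (P n : ℕ)) atTop atTop :=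
      tendsto_atTop_mono (fun n => hPgeo 2 n2 hn2 n) h2
    exact tendsto_natCast_atTop_atTop.comp h3
  have hc0 : 0 < φ 2 * Real.log 2 := mul_pos (hφpos 2 le_rfl) (Real.log_pos one_lt_two)
  have hYgeP : ∀ n, φ 2 * Real.log 2 * (P n : ℝ) ≤ Y n := by
    intro n
    have h1 : φ 2 ≤ φ (q n) := hφmono (le_refl (2:ℝ) : (2:ℝ) ∈ Set.Ici 2) (hqR n) (hqR n)
    have h2 : (0:ℝ) < (P n : ℝ) * Real.log 2 := by
      have := hP1 n
      have : (1:ℝ) ≤ (P n : ℝ) := by exact_mod_cast this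
      nlinarith [Real.log_pos one_lt_two]
    rw [hYdef]
    simp only
    rw [hlogq_eq n]
    nlinarith [hφpos 2 le_rfl]
  have hYtop : Tendsto Y atTop atTop :=
    tendsto_atTop_mono hYgeP (hPtop.const_mul_atTop hc0)
  have hrtend : Tendsto r atTop (nhds 0) := by
    have : Tendsto (fun n => Real.exp (-(Y n))) atTop (nhds 0) :=
      Real.tendsto_exp_atBot.comp (tendsto_neg_atBot_iff.2 hYtop)
    exact this.congr fun n => (hrexp n).symm
  -- the set of relevant grid indices at each level
  set K : ℕ → Finset ℤ := fun n =>
    (Finset.Icc 0 (q n : ℤ)).filter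
      (fun k => ∃ x ∈ E, |x - (k : ℝ) / (q n : ℝ)| ≤ r n) with hKdef
  have hEi' : ∀ n x, x ∈ E → x ∈ Set.Icc (0 : ℝ) 1 ∧ infDist x (G n) ≤ r n := by
    intro n x hx
    rw [hE] at hx
    have := Set.mem_iInter.1 hx n
    rw [hEi] at this
    exact this
  have hnear : ∀ n x, x ∈ E → ∃ k : ℤ, k ∈ K n ∧ |x - (k : ℝ) / (q n : ℝ)| ≤ r n := by
    intro n x hx
    obtain ⟨hx01, hxd⟩ := hEi' n x hx
    have hGeq : G n = (fun k : ℤ => (k : ℝ) / (q n : ℝ)) '' (Set.Icc (0 : ℤ) (q n : ℤ)) := by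
      rw [hG]
      ext y
      simp only [Set.mem_setOf_eq, Set.mem_image, Set.mem_Icc]
      constructor
      · rintro ⟨k, h1, h2, h3⟩; exact ⟨k, ⟨h1, h2⟩, h3.symm⟩
      · rintro ⟨k, ⟨h1, h2⟩, h3⟩; exact ⟨k, h1, h2, h3.symm⟩
    have hfin : (G n).Finite := hGeq ▸ (Set.finite_Icc _ _).image _
    have hne : (G n).Nonempty := by
      refine ⟨0, ?_⟩
      rw [hG]
      exact ⟨0, le_refl 0, by positivity, by simp⟩
    obtain ⟨y, hyG, hyd⟩ := hfin.isCompact.exists_infDist_eq_dist hne x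
    rw [hG] at hyG
    obtain ⟨k, hk0, hkq, rfl⟩ := hyG
    have hdist : |x - (k : ℝ) / (q n : ℝ)| ≤ r n := by
      rw [← Real.dist_eq, ← hyd]; exact hxd
    exact ⟨k, Finset.mem_filter.2 ⟨Finset.mem_Icc.2 ⟨hk0, hkq⟩, ⟨x, hx, hdist⟩⟩, hdist⟩
  -- counting: growth of K
  have hcard_succ : ∀ n, ((K (n + 1)).card : ℝ) ≤
      ((K n).card : ℝ) * (4 * (1 + (q n : ℝ) ^ ((M n : ℝ) - φ (q n)))) := by
    intro n
    set c : ℤ → ℝ := fun k' => (k' : ℝ) / (q n : ℝ) with hcdef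
    set F : ℤ → Finset ℤ := fun k' =>
      Finset.Icc ⌈(q (n + 1) : ℝ) * (c k' - 2 * r n)⌉ ⌊(q (n + 1) : ℝ) * (c k' + 2 * r n)⌋
      with hFdef
    have hq1 : (0 : ℝ) < (q (n + 1) : ℝ) := hqpos (n + 1)
    have hsub : K (n + 1) ⊆ (K n).biUnion F := by
      intro k hk
      obtain ⟨-, x, hxE, hxk⟩ := Finset.mem_filter.1 hk
      obtain ⟨k', hk', hxk'⟩ := hnear n x hxE
      refine Finset.mem_biUnion.2 ⟨k', hk', ?_⟩
      have h1 : |(k : ℝ) / (q (n + 1) : ℝ) - c k'| ≤ 2 * r n := by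
        have t1 := abs_sub_le ((k : ℝ) / (q (n + 1) : ℝ)) x (c k')
        have t2 : |(k : ℝ) / (q (n + 1) : ℝ) - x| = |x - (k : ℝ) / (q (n + 1) : ℝ)| :=
          abs_sub_comm _ _
        have t3 : r (n + 1) ≤ r n := hranti n
        rw [t2] at t1
        calc |(k : ℝ) / (q (n + 1) : ℝ) - c k'| ≤
            |x - (k : ℝ) / (q (n + 1) : ℝ)| + |x - c k'| := t1
          _ ≤ r (n + 1) + r n := add_le_add hxk hxk'
          _ ≤ 2 * r n := by linarith
      obtain ⟨hlo, hhi⟩ := abs_le.1 h1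
      refine Finset.mem_Icc.2 ⟨?_, ?_⟩
      · rw [Int.ceil_le]
        have : c k' - 2 * r n ≤ (k : ℝ) / (q (n + 1) : ℝ) := by linarith
        calc (q (n + 1) : ℝ) * (c k' - 2 * r n) ≤
            (q (n + 1) : ℝ) * ((k : ℝ) / (q (n + 1) : ℝ)) :=
              mul_le_mul_of_nonneg_left this hq1.le
          _ = (k : ℝ) := by field_simp
      · rw [Int.le_floor]
        have : (k : ℝ) / (q (n + 1) : ℝ) ≤ c k' + 2 * r n := by linarith
        calc (k : ℝ) = (q (n + 1) : ℝ) * ((k : ℝ) / (q (n + 1) : ℝ)) := by field_simp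
          _ ≤ (q (n + 1) : ℝ) * (c k' + 2 * r n) := mul_le_mul_of_nonneg_left this hq1.le
    have hF : ∀ k' : ℤ, ((F k').card : ℝ) ≤ 4 * (q (n + 1) : ℝ) * r n + 1 := by
      intro k'
      have hRpos : (0 : ℝ) < 4 * (q (n + 1) : ℝ) * r n :=
        mul_pos (mul_pos (by norm_num) hq1) (hrpos n)
      set a : ℤ := ⌈(q (n + 1) : ℝ) * (c k' - 2 * r n)⌉ with hadef
      set b : ℤ := ⌊(q (n + 1) : ℝ) * (c k' + 2 * r n)⌋ with hbdef
      rcases le_or_gt a b with hab | hab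
      · have hcard : ((Finset.Icc a b).card : ℝ) = (b : ℝ) + 1 - (a : ℝ) := by
          rw [Int.card_Icc]
          have h0 : (0 : ℤ) ≤ b + 1 - a := by omega
          have := Int.toNat_of_nonneg h0
          have hcast : (((b + 1 - a).toNat : ℤ) : ℝ) = ((b : ℝ) + 1 - (a : ℝ)) := by
            rw [this]; push_cast; ring
          exact_mod_cast hcast
        show ((Finset.Icc a b).card : ℝ) ≤ _
        rw [hcard]
        have h1 : (b : ℝ) ≤ (q (n + 1) : ℝ) * (c k' + 2 * r n) := Int.floor_le _
        have h2 : (q (n + 1) : ℝ) * (c k' - 2 * r n) ≤ (a : ℝ) := Int.le_ceil _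
        nlinarith
      · show ((Finset.Icc a b).card : ℝ) ≤ _
        rw [Finset.Icc_eq_empty (by exact_mod_cast hab.not_ge)]
        simp only [Finset.card_empty, Nat.cast_zero]
        linarith
    have hqr : (q (n + 1) : ℝ) * r n = (q n : ℝ) ^ ((M n : ℝ) - φ (q n)) := by
      rw [hqrec, hr, Nat.cast_pow]
      rw [← Real.rpow_natCast ((q n : ℝ)) (M n), ← Real.rpow_add (hqpos n)]
      ring_nf
    calc ((K (n + 1)).card : ℝ) ≤ (((K n).biUnion F).card : ℝ) := by
          exact_mod_cast Finset.card_le_card hsub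
      _ ≤ ((∑ k' ∈ K n, (F k').card : ℕ) : ℝ) := by exact_mod_cast Finset.card_biUnion_le
      _ = ∑ k' ∈ K n, ((F k').card : ℝ) := by push_cast; ring
      _ ≤ ∑ _k' ∈ K n, (4 * (q (n + 1) : ℝ) * r n + 1) :=
          Finset.sum_le_sum fun k' _ => hF k'
      _ = ((K n).card : ℝ) * (4 * (q (n + 1) : ℝ) * r n + 1) := by
          rw [Finset.sum_const, nsmul_eq_mul]
      _ ≤ ((K n).card : ℝ) * (4 * (1 + (q n : ℝ) ^ ((M n : ℝ) - φ (q n)))) := by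
          refine mul_le_mul_of_nonneg_left ?_ (Nat.cast_nonneg _)
          rw [← hqr]
          nlinarith [mul_pos hq1 (hrpos n)]
  have hcard : ∀ n, ((K n).card : ℝ) ≤
      3 * 4 ^ n * ∏ j ∈ Finset.range n, (1 + (q j : ℝ) ^ ((M j : ℝ) - φ ((q j : ℕ) : ℝ))) := by
    intro n
    induction n with
    | zero =>
      simp only [pow_zero, Finset.range_zero, Finset.prod_empty, mul_one]
      have h1 : (K 0).card ≤ (Finset.Icc 0 (q 0 : ℤ)).card := Finset.card_filter_le _ _
      have h2 : (Finset.Icc 0 (q 0 : ℤ)).card = 3 := by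
        rw [hq0]; decide
      rw [h2] at h1
      exact_mod_cast h1
    | succ n ih =>
      have hfpos : (0 : ℝ) ≤ 4 * (1 + (q n : ℝ) ^ ((M n : ℝ) - φ (q n))) := by
        have := Real.rpow_nonneg (hqpos n).le ((M n : ℝ) - φ (q n))
        linarith
      have hprodpos : (0 : ℝ) ≤ ∏ j ∈ Finset.range n,
          (1 + (q j : ℝ) ^ ((M j : ℝ) - φ ((q j : ℕ) : ℝ))) := by
        apply Finset.prod_nonneg
        intro j _
        have := Real.rpow_nonneg (hqpos j).le ((M j : ℝ) - φ (q j))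
        linarith
      calc ((K (n + 1)).card : ℝ) ≤
          ((K n).card : ℝ) * (4 * (1 + (q n : ℝ) ^ ((M n : ℝ) - φ (q n)))) := hcard_succ n
        _ ≤ (3 * 4 ^ n * ∏ j ∈ Finset.range n,
              (1 + (q j : ℝ) ^ ((M j : ℝ) - φ ((q j : ℕ) : ℝ)))) *
            (4 * (1 + (q n : ℝ) ^ ((M n : ℝ) - φ (q n)))) :=
          mul_le_mul_of_nonneg_right ih hfpos
        _ = 3 * 4 ^ (n + 1) * ∏ j ∈ Finset.range (n + 1),
              (1 + (q j : ℝ) ^ ((M j : ℝ) - φ ((q j : ℕ) : ℝ))) := by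
          rw [Finset.prod_range_succ, pow_succ]
          ring
  -- main estimate: measure zero for every s > 1 - ε
  have hmain : ∀ s : ℝ, 1 - ε < s → MeasureTheory.Measure.mkMetric (hGauge s) E = 0 := by
    intro s hs
    set δ : ℝ := s - (1 - ε) with hδdef
    have hδ : 0 < δ := by rw [hδdef]; linarith
    obtain ⟨KN, hKN8⟩ : ∃ KN : ℕ, (8 : ℝ) ≤ (KN : ℝ) ^ δ := by
      have h1 : Tendsto (fun x : ℝ => x ^ δ) atTop atTop := tendsto_rpow_atTop hδ
      have h2 : Tendsto (fun k : ℕ => ((k : ℝ)) ^ δ) atTop atTop :=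
        h1.comp tendsto_natCast_atTop_atTop
      exact (h2.eventually_ge_atTop 8).exists
    obtain ⟨n1, hn1⟩ := (hMtop.eventually_ge_atTop KN).exists_forall_of_atTop
    set c0 : ℝ := φ 2 * Real.log 2 with hc0def
    have h2s : (0:ℝ) < (2:ℝ) ^ |s| := Real.rpow_pos_of_pos two_pos _
    set A : ℝ := 3 * C * (2:ℝ) ^ |s| with hAdef
    have hA : 0 < A := by
      have : (0:ℝ) < 3 * C := by linarith
      exact mul_pos this h2s
    have hc0δ : (0:ℝ) < c0 ^ δ := Real.rpow_pos_of_pos hc0 δ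
    set B : ℝ := A * 8 ^ n1 / c0 ^ δ with hBdef
    have hB : 0 < B := div_pos (mul_pos hA (by positivity)) hc0δ
    -- key eventual real estimate
    have hkey : ∀ᶠ n in atTop,
        ((K n).card : ℝ) * (Real.log (1 / (2 * r n))) ^ (-s) ≤ B * (1/2 : ℝ) ^ n := by
      filter_upwards [hbound, hYtop.eventually_ge_atTop 2, eventually_ge_atTop n1]
        with n hbn hY2 hnn1
      set X : ℝ := Real.log (1 / (2 * r n)) with hXdef
      have hXeq : X = Y n - Real.log 2 := by
        rw [hXdef, one_div, Real.log_inv, Real.log_mul two_ne_zero (hrpos n).ne', hrexp,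
          Real.log_exp]
        ring
      have hlog2pos : 0 < Real.log 2 := Real.log_pos one_lt_two
      have hlog2le : Real.log 2 ≤ 1 := by
        linarith [Real.log_le_sub_one_of_pos (two_pos : (0:ℝ) < 2)]
      have hXl : Y n / 2 ≤ X := by rw [hXeq]; linarith
      have hXu : X ≤ Y n := by rw [hXeq]; linarith
      have hXpos : 0 < X := by linarith
      have hgb : X ^ (-s) ≤ (2:ℝ) ^ |s| * Y n ^ (-s) := by
        rcases le_or_gt 0 s with hs0 | hs0
        · have h1 : X ^ (-s) ≤ (Y n / 2) ^ (-s) :=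
            Real.rpow_le_rpow_of_nonpos (by linarith [hYpos n]) hXl (neg_nonpos.2 hs0)
          have h2 : (Y n / 2 : ℝ) ^ (-s) = Y n ^ (-s) * (2:ℝ) ^ s := by
            rw [Real.div_rpow (hYpos n).le (by norm_num : (0:ℝ) ≤ 2),
              Real.rpow_neg (by norm_num : (0:ℝ) ≤ 2) s, div_eq_mul_inv, inv_inv]
          rw [h2] at h1
          have h3 : (2:ℝ) ^ s ≤ (2:ℝ) ^ |s| :=
            Real.rpow_le_rpow_of_exponent_le one_le_two (le_abs_self s)
          nlinarith [Real.rpow_nonneg (hYpos n).le (-s)]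
        · have h1 : X ^ (-s) ≤ Y n ^ (-s) := Real.rpow_le_rpow hXpos.le hXu (by linarith)
          have h2 : (1:ℝ) ≤ (2:ℝ) ^ |s| := by
            have := Real.rpow_le_rpow_of_exponent_le one_le_two (abs_nonneg s)
            rwa [Real.rpow_zero] at this
          nlinarith [Real.rpow_nonneg (hYpos n).le (-s)]
      have hYe : Y n ^ ((1:ℝ) - ε) * Y n ^ (-s) = Y n ^ (-δ) := by
        rw [← Real.rpow_add (hYpos n)]
        congr 1
        rw [hδdef]; ring
      have hcb : ((K n).card : ℝ) ≤ 3 * 4 ^ n * (C * Y n ^ ((1:ℝ) - ε)) :=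
        le_trans (hcard n) (mul_le_mul_of_nonneg_left hbn (by positivity))
      have hXs_nonneg : 0 ≤ X ^ (-s) := Real.rpow_nonneg hXpos.le _
      have hY1ε : 0 ≤ Y n ^ ((1:ℝ) - ε) := Real.rpow_nonneg (hYpos n).le _
      have hcomb : ((K n).card : ℝ) * X ^ (-s) ≤ A * 4 ^ n * Y n ^ (-δ) := by
        calc ((K n).card : ℝ) * X ^ (-s)
            ≤ (3 * 4 ^ n * (C * Y n ^ ((1:ℝ) - ε))) * ((2:ℝ) ^ |s| * Y n ^ (-s)) := by
              refine mul_le_mul hcb hgb hXs_nonneg ?_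
              positivity
          _ = A * 4 ^ n * (Y n ^ ((1:ℝ) - ε) * Y n ^ (-s)) := by rw [hAdef]; ring
          _ = A * 4 ^ n * Y n ^ (-δ) := by rw [hYe]
      have hKNnn : (0:ℝ) ≤ (KN:ℝ) := Nat.cast_nonneg _
      have hPn : ((KN : ℝ)) ^ (n - n1 : ℕ) ≤ (P n : ℝ) := by
        exact_mod_cast hPgeo KN n1 hn1 n
      have hYgeKn : c0 * (KN : ℝ) ^ (n - n1 : ℕ) ≤ Y n :=
        le_trans (mul_le_mul_of_nonneg_left hPn hc0.le) (hYgeP n)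
      have hgrow : c0 ^ δ * 8 ^ (n - n1 : ℕ) ≤ Y n ^ δ := by
        have h1 : (c0 * (KN:ℝ) ^ (n - n1 : ℕ)) ^ δ ≤ Y n ^ δ :=
          Real.rpow_le_rpow (by positivity) hYgeKn hδ.le
        have h2 : (c0 * (KN:ℝ) ^ (n - n1:ℕ)) ^ δ = c0 ^ δ * ((KN:ℝ) ^ (n - n1:ℕ)) ^ δ :=
          Real.mul_rpow hc0.le (by positivity)
        have h3 : ((KN:ℝ) ^ (n - n1:ℕ)) ^ δ = ((KN:ℝ) ^ δ) ^ (n - n1:ℕ) := by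
          rw [← Real.rpow_natCast (KN:ℝ) (n - n1), ← Real.rpow_natCast ((KN:ℝ) ^ δ) (n - n1),
            ← Real.rpow_mul hKNnn, ← Real.rpow_mul hKNnn, mul_comm]
        have h4 : (8:ℝ) ^ (n - n1:ℕ) ≤ ((KN:ℝ) ^ δ) ^ (n - n1:ℕ) :=
          pow_le_pow_left₀ (by norm_num) hKN8 _
        calc c0 ^ δ * 8 ^ (n - n1:ℕ) ≤ c0 ^ δ * ((KN:ℝ)^δ) ^ (n - n1:ℕ) :=
              mul_le_mul_of_nonneg_left h4 hc0δ.le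
          _ = (c0 * (KN:ℝ) ^ (n-n1:ℕ)) ^ δ := by rw [h2, h3]
          _ ≤ Y n ^ δ := h1
      have h8pos : (0:ℝ) < 8 ^ (n - n1:ℕ) := by positivity
      have hYδ : Y n ^ (-δ) ≤ (c0 ^ δ * 8 ^ (n - n1:ℕ))⁻¹ := by
        rw [Real.rpow_neg (hYpos n).le]
        exact inv_anti₀ (mul_pos hc0δ h8pos) hgrow
      have hfin : A * 4 ^ n * Y n ^ (-δ) ≤ B * (1/2:ℝ) ^ n := by
        have h8 : (8:ℝ) ^ (n - n1:ℕ) = 8 ^ n * ((8:ℝ) ^ n1)⁻¹ :=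
          pow_sub₀ (8:ℝ) (by norm_num) hnn1
        have hhalf : (1/2:ℝ) ^ n = 4 ^ n / 8 ^ n := by
          rw [← div_pow]; norm_num
        have heq : A * 4 ^ n * (c0 ^ δ * 8 ^ (n - n1:ℕ))⁻¹ = B * (1/2:ℝ) ^ n := by
          rw [hBdef, h8, hhalf]
          rw [mul_inv, mul_inv, inv_inv, div_eq_mul_inv, div_eq_mul_inv]
          ring
        calc A * 4 ^ n * Y n ^ (-δ) ≤ A * 4 ^ n * (c0 ^ δ * 8 ^ (n - n1:ℕ))⁻¹ :=
              mul_le_mul_of_nonneg_left hYδ (mul_nonneg hA.le (by positivity))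
          _ = B * (1/2:ℝ) ^ n := heq
      calc ((K n).card : ℝ) * X ^ (-s) ≤ A * 4 ^ n * Y n ^ (-δ) := hcomb
        _ ≤ B * (1/2:ℝ) ^ n := hfin
    -- pass to ENNReal and apply mkMetric_le_liminf_sum
    have hdiam : ∀ n (i : (K n : Finset ℤ)),
        EMetric.diam (Set.Icc (((i : ℤ) : ℝ) / (q n : ℝ) - r n)
          (((i : ℤ) : ℝ) / (q n : ℝ) + r n)) = ENNReal.ofReal (2 * r n) := by
      intro n i
      rw [show EMetric.diam = Metric.ediam from rfl, Real.ediam_Icc]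
      congr 1
      ring
    have hsum_le : ∀ᶠ n in atTop,
        (∑ i : (K n : Finset ℤ), hGauge s (EMetric.diam
            (Set.Icc (((i : ℤ) : ℝ) / (q n : ℝ) - r n) (((i : ℤ) : ℝ) / (q n : ℝ) + r n))))
          ≤ ENNReal.ofReal (B * (1/2 : ℝ) ^ n) := by
      filter_upwards [hkey] with n hkn
      calc (∑ i : (K n : Finset ℤ), hGauge s (EMetric.diam
              (Set.Icc (((i : ℤ) : ℝ) / (q n : ℝ) - r n) (((i : ℤ) : ℝ) / (q n : ℝ) + r n))))
          = ∑ _i : (K n : Finset ℤ), hGauge s (ENNReal.ofReal (2 * r n)) :=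
            Finset.sum_congr rfl (fun i _ => by rw [hdiam n i])
        _ = ((K n).card : ENNReal) * hGauge s (ENNReal.ofReal (2 * r n)) := by
            rw [Finset.sum_const, Finset.card_univ, Fintype.card_coe, nsmul_eq_mul]
        _ = ENNReal.ofReal (((K n).card : ℝ) * (Real.log (1 / (2 * r n))) ^ (-s)) := by
            unfold hGauge
            rw [ENNReal.toReal_ofReal (by linarith [hrpos n] : (0:ℝ) ≤ 2 * r n)]
            rw [← ENNReal.ofReal_natCast, ← ENNReal.ofReal_mul (Nat.cast_nonneg _)]
        _ ≤ ENNReal.ofReal (B * (1/2 : ℝ) ^ n) := ENNReal.ofReal_le_ofReal hkn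
    refine le_antisymm ?_ zero_le
    have hcov : ∀ᶠ n in atTop, E ⊆ ⋃ i : (K n : Finset ℤ),
        Set.Icc (((i : ℤ) : ℝ) / (q n : ℝ) - r n) (((i : ℤ) : ℝ) / (q n : ℝ) + r n) := by
      refine Filter.Eventually.of_forall ?_
      intro n x hx
      obtain ⟨k, hkK, hkd⟩ := hnear n x hx
      refine Set.mem_iUnion.2 ⟨⟨k, hkK⟩, ?_⟩
      obtain ⟨h1, h2⟩ := abs_le.1 hkd
      have hco : ((⟨k, hkK⟩ : {y // y ∈ K n}) : ℤ) = k := rfl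
      rw [Set.mem_Icc, hco]
      constructor <;> linarith
    have hdlim : Tendsto (fun n => ENNReal.ofReal (2 * r n)) atTop (nhds 0) := by
      have h1 : Tendsto (fun n => 2 * r n) atTop (nhds (2 * 0)) := hrtend.const_mul 2
      rw [mul_zero] at h1
      simpa using ENNReal.tendsto_ofReal h1
    have hht : ∀ᶠ n in atTop, ∀ i : (K n : Finset ℤ),
        EMetric.diam (Set.Icc (((i : ℤ) : ℝ) / (q n : ℝ) - r n)
          (((i : ℤ) : ℝ) / (q n : ℝ) + r n)) ≤ ENNReal.ofReal (2 * r n) :=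
      Filter.Eventually.of_forall fun n i => le_of_eq (hdiam n i)
    have hle := MeasureTheory.Measure.mkMetric_le_liminf_sum E
      (fun n => ENNReal.ofReal (2 * r n)) hdlim
      (fun n (i : (K n : Finset ℤ)) =>
        Set.Icc (((i : ℤ) : ℝ) / (q n : ℝ) - r n) (((i : ℤ) : ℝ) / (q n : ℝ) + r n))
      hht hcov (hGauge s)
    refine le_trans hle ?_
    have hlim0 : Tendsto (fun n : ℕ => ENNReal.ofReal (B * (1/2 : ℝ) ^ n)) atTop (nhds 0) := by
      have h1 : Tendsto (fun n : ℕ => B * (1/2 : ℝ) ^ n) atTop (nhds (B * 0)) :=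
        (tendsto_pow_atTop_nhds_zero_of_lt_one (by norm_num) (by norm_num)).const_mul B
      rw [mul_zero] at h1
      simpa using ENNReal.tendsto_ofReal h1
    calc liminf (fun n => ∑ i : (K n : Finset ℤ), hGauge s (EMetric.diam
            (Set.Icc (((i : ℤ) : ℝ) / (q n : ℝ) - r n) (((i : ℤ) : ℝ) / (q n : ℝ) + r n))))
          atTop
        ≤ liminf (fun n : ℕ => ENNReal.ofReal (B * (1/2 : ℝ) ^ n)) atTop :=
          liminf_le_liminf hsum_le
      _ = 0 := hlim0.liminf_eq
  refine ⟨hmain, ?_⟩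
  rcases le_or_gt ε 1 with hε1 | hε1
  · have hbdd : BddBelow {s : ℝ | 0 < s ∧ MeasureTheory.Measure.mkMetric (hGauge s) E = 0} :=
      ⟨0, fun x hx => hx.1.le⟩
    refine le_of_forall_pos_le_add ?_
    intro η hη
    exact csInf_le hbdd ⟨by linarith, hmain _ (by linarith)⟩
  · exfalso
    have hconv : Tendsto (fun n => C * Y n ^ ((1 : ℝ) - ε)) atTop (nhds (C * 0)) := by
      refine Tendsto.const_mul C ?_
      have h1 : Tendsto (fun x : ℝ => x ^ (-(ε - 1))) atTop (nhds 0) :=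
        tendsto_rpow_neg_atTop (by linarith)
      have := h1.comp hYtop
      simpa [show -(ε - 1) = 1 - ε by ring, Function.comp_def] using this
    rw [mul_zero] at hconv
    have h2 : ∀ᶠ n in atTop, C * Y n ^ ((1 : ℝ) - ε) < 1 :=
      hconv.eventually (gt_mem_nhds one_pos)
    obtain ⟨n, hb, hlt⟩ := (hbound.and h2).exists
    have h3 : (1 : ℝ) ≤ ∏ j ∈ Finset.range n,
        (1 + (q j : ℝ) ^ ((M j : ℝ) - φ ((q j : ℕ) : ℝ))) := by
      calc (1:ℝ) = ∏ _j ∈ Finset.range n, (1:ℝ) := by simp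
        _ ≤ _ := by
          refine Finset.prod_le_prod (fun j _ => zero_le_one) ?_
          intro j _
          have := Real.rpow_nonneg (hqpos j).le ((M j : ℝ) - φ (q j))
          linarith
    have : C * Y n ^ ((1:ℝ) - ε) = C * (φ ((q n : ℕ) : ℝ) * Real.log (q n : ℝ)) ^ ((1:ℝ) - ε) := rfl
    linarith [hb, this ▸ hlt]
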